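/- Let ι be an index set, let (E_j)_{j∈ι} be real inner product spaces, let c : ι → (0,∞), and let ε > 0. Assume that the set S := { j ∈ ι : c_j ≥ ε² } is finite, that E_j is finite-dimensional for every j ∈ S, and that c_j ≠ ε² for every j ∈ ι. Let A := { w ∈ lp(E,2) : ∑_{j∈ι} c_j⁻¹ ‖w_j‖² ≤ 1 }. Then the smallest natural number n for which there exists a linear subspace M of lp(E,2) of dimension at most n with inf_{g∈M} ‖w − g‖ ≤ ε for all w ∈ A is equal to ∑_{j∈S} dim E_j. -/

import Mathlib

open scoped ENNReal

section aux

variable {ι : Type*} [DecidableEq ι] {E : ι → Type*} [∀ j, NormedAddCommGroup (E j)]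

theorem lp_single_add (p : ℝ≥0∞) (i : ι) (a b : E i) :
    lp.single p i (a + b) = lp.single p i a + lp.single p i b := by
  apply lp.ext
  funext j
  rw [lp.coeFn_add, Pi.add_apply]
  by_cases h : j = i
  · subst h; simp [lp.single_apply_self]
  · simp [lp.single_apply_ne p i _ h]

variable [∀ j, InnerProductSpace ℝ (E j)]

/-- The embedding of a finite product into `lp E 2` supported on a finset. -/
noncomputable def phiL (s : Finset ι) : (∀ j : s, E j) →ₗ[ℝ] lp E 2 where
  toFun v := ∑ j : s, lp.single 2 (j : ι) (v j)
  map_add' v w := by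
    simp_rw [Pi.add_apply, lp_single_add, Finset.sum_add_distrib]
  map_smul' r v := by
    simp_rw [Pi.smul_apply, lp.single_smul, ← Finset.smul_sum]
    rfl

theorem phiL_apply_mem (s : Finset ι) (v : ∀ j : s, E j) (j : ι) (hj : j ∈ s) :
    (phiL s v : ∀ j, E j) j = v ⟨j, hj⟩ := by
  have : (phiL s v : ∀ j, E j) j = ∑ i : s, (lp.single 2 (i : ι) (v i) : ∀ j, E j) j := by
    rw [show phiL s v = ∑ i : s, lp.single 2 (i : ι) (v i) from rfl, lp.coeFn_sum,
      Finset.sum_apply]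
  rw [this, Finset.sum_eq_single_of_mem (⟨j, hj⟩ : s) (Finset.mem_univ _)]
  · exact lp.single_apply_self 2 j _
  · intro i _ hi
    exact lp.single_apply_ne 2 (i : ι) _ (fun h => hi (Subtype.ext h.symm))

theorem phiL_apply_not_mem (s : Finset ι) (v : ∀ j : s, E j) (j : ι) (hj : j ∉ s) :
    (phiL s v : ∀ j, E j) j = 0 := by
  have : (phiL s v : ∀ j, E j) j = ∑ i : s, (lp.single 2 (i : ι) (v i) : ∀ j, E j) j := by
    rw [show phiL s v = ∑ i : s, lp.single 2 (i : ι) (v i) from rfl, lp.coeFn_sum,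
      Finset.sum_apply]
  rw [this, Finset.sum_eq_zero]
  intro i _
  exact lp.single_apply_ne 2 (i : ι) _ (fun h => hj (by rw [h]; exact i.2))

theorem phiL_injective (s : Finset ι) : Function.Injective (phiL (E := E) s) := by
  rw [← LinearMap.ker_eq_bot, Submodule.eq_bot_iff]
  intro v hv
  funext j
  have := congrArg (fun f : lp E 2 => (f : ∀ j, E j) (j : ι)) hv
  simp only [lp.coeFn_zero, Pi.zero_apply] at this
  rw [phiL_apply_mem s v j j.2] at this
  simpa using this

theorem lp_norm_sq_tsum (f : lp E 2) : ‖f‖ ^ 2 = ∑' j, ‖f j‖ ^ 2 := by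
  have h := lp.norm_rpow_eq_tsum (p := 2) (by norm_num) f
  have h2 : ((2 : ℝ≥0∞).toReal) = ((2 : ℕ) : ℝ) := by norm_num
  rw [h2] at h
  simp_rw [Real.rpow_natCast] at h
  exact_mod_cast h

theorem lp_summable_sq (f : lp E 2) : Summable fun j => ‖f j‖ ^ 2 := by
  have h := (lp.memℓp f).summable (p := 2) (by norm_num)
  have h2 : ((2 : ℝ≥0∞).toReal) = ((2 : ℕ) : ℝ) := by norm_num
  rw [h2] at h
  simp_rw [Real.rpow_natCast] at h
  exact_mod_cast h

theorem lp_norm_sq_eq_sum {s : Finset ι} (f : lp E 2) (hf : ∀ j ∉ s, (f : ∀ j, E j) j = 0) :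
    ‖f‖ ^ 2 = ∑ j ∈ s, ‖f j‖ ^ 2 := by
  rw [lp_norm_sq_tsum]
  exact tsum_eq_sum (fun j hj => by rw [hf j hj]; simp)

end aux

set_option maxHeartbeats 1000000 in
/-- Proposition 2.
Let `c j > 0`, `ε > 0`, assume `S = { j : c j ≥ ε² }` is finite, `E j` is finite dimensional
for `j ∈ S`, and `c j ≠ ε²` for all `j`.  For the ellipsoid
`A = { w ∈ lp E 2 : ∑ c j⁻¹ ‖w j‖² ≤ 1 }`, the smallest `n` for which some linear subspace
`M` of `lp E 2` of dimension at most `n` approximates every `w ∈ A` to within `ε` equals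
`∑_{j ∈ S} dim E j`. -/
theorem stmt4 {ι : Type*} (E : ι → Type*) [∀ j, NormedAddCommGroup (E j)]
    [∀ j, InnerProductSpace ℝ (E j)]
    (c : ι → ℝ) (hc : ∀ j, 0 < c j) (ε : ℝ) (hε : 0 < ε)
    (hS : {j | ε ^ 2 ≤ c j}.Finite)
    (hfin : ∀ j, ε ^ 2 ≤ c j → FiniteDimensional ℝ (E j))
    (hne : ∀ j, c j ≠ ε ^ 2) :
    sInf {n : ℕ | ∃ M : Submodule ℝ (lp E 2), FiniteDimensional ℝ M ∧
        Module.finrank ℝ M ≤ n ∧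
        ∀ w : lp E 2, (∑' j, ENNReal.ofReal ((c j)⁻¹ * ‖w j‖ ^ 2) ≤ 1) →
          Metric.infDist (w : lp E 2) (M : Set (lp E 2)) ≤ ε} =
      ∑ j ∈ hS.toFinset, Module.finrank ℝ (E j) := by
  haveI : DecidableEq ι := Classical.decEq ι
  set s := hS.toFinset with hs_def
  have hmem : ∀ j, j ∈ s ↔ ε ^ 2 ≤ c j := fun j => hS.mem_toFinset
  haveI hED : ∀ j : s, FiniteDimensional ℝ (E j) := fun j => hfin j ((hmem j).1 j.2)
  set N := ∑ j ∈ s, Module.finrank ℝ (E j) with hN_def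
  set φ := phiL (E := E) s with hφ_def
  have hφinj := phiL_injective (E := E) s
  have hrankF : Module.finrank ℝ (∀ j : s, E j) = N := by
    rw [Module.finrank_pi_fintype, hN_def, ← Finset.sum_coe_sort s fun j => Module.finrank ℝ (E j)]
  -- N is in the set
  have hNmem : N ∈ {n : ℕ | ∃ M : Submodule ℝ (lp E 2), FiniteDimensional ℝ M ∧
      Module.finrank ℝ M ≤ n ∧
      ∀ w : lp E 2, (∑' j, ENNReal.ofReal ((c j)⁻¹ * ‖w j‖ ^ 2) ≤ 1) →
        Metric.infDist (w : lp E 2) ((M : Submodule ℝ (lp E 2)) : Set (lp E 2)) ≤ ε} := by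
    refine ⟨LinearMap.range φ, ?_, ?_, ?_⟩
    · exact Module.Finite.range φ
    · rw [LinearMap.finrank_range_of_inj hφinj, hrankF]
    · intro w hw
      set g := φ (fun j : s => (w : ∀ j, E j) j) with hg_def
      have hgmem : g ∈ LinearMap.range φ := ⟨_, rfl⟩
      -- summability of the weight series
      have hnn : ∀ j, 0 ≤ (c j)⁻¹ * ‖w j‖ ^ 2 :=
        fun j => mul_nonneg (inv_nonneg.2 (hc j).le) (sq_nonneg _)
      have hfin' : (∑' j, ENNReal.ofReal ((c j)⁻¹ * ‖w j‖ ^ 2)) ≠ ⊤ :=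
        (lt_of_le_of_lt hw ENNReal.one_lt_top).ne
      have h1 : Summable fun j => (c j)⁻¹ * ‖w j‖ ^ 2 := by
        have := ENNReal.summable_toReal hfin'
        simpa only [ENNReal.toReal_ofReal (hnn _)] using this
      have h2 : (∑' j, (c j)⁻¹ * ‖w j‖ ^ 2) ≤ 1 := by
        rw [← ENNReal.ofReal_le_one, ENNReal.ofReal_tsum_of_nonneg hnn h1]
        exact hw
      have hcoord : ∀ j, ((w - g : lp E 2) : ∀ j, E j) j
          = if j ∈ s then 0 else (w : ∀ j, E j) j := by
        intro j
        rw [lp.coeFn_sub, Pi.sub_apply]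
        by_cases hj : j ∈ s
        · rw [if_pos hj, hg_def, phiL_apply_mem s _ j hj, sub_self]
        · rw [if_neg hj, hg_def, phiL_apply_not_mem s _ j hj, sub_zero]
      have h4 : ∀ j, ‖((w - g : lp E 2) : ∀ j, E j) j‖ ^ 2
          ≤ ε ^ 2 * ((c j)⁻¹ * ‖w j‖ ^ 2) := by
        intro j
        rw [hcoord j]
        by_cases hj : j ∈ s
        · rw [if_pos hj]
          simpa using mul_nonneg (sq_nonneg ε) (hnn j)
        · rw [if_neg hj]
          have hcj : c j < ε ^ 2 := lt_of_not_ge (fun h => hj ((hmem j).2 h))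
          have hinv : c j * (c j)⁻¹ = 1 := mul_inv_cancel₀ (hc j).ne'
          have h1le : 1 ≤ ε ^ 2 * (c j)⁻¹ := by
            rw [← hinv]
            exact mul_le_mul_of_nonneg_right hcj.le (inv_nonneg.2 (hc j).le)
          calc ‖(w : ∀ j, E j) j‖ ^ 2 = 1 * ‖(w : ∀ j, E j) j‖ ^ 2 := (one_mul _).symm
            _ ≤ (ε ^ 2 * (c j)⁻¹) * ‖(w : ∀ j, E j) j‖ ^ 2 :=
                mul_le_mul_of_nonneg_right h1le (sq_nonneg _)
            _ = ε ^ 2 * ((c j)⁻¹ * ‖(w : ∀ j, E j) j‖ ^ 2) := by ring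
      have h5 : ‖w - g‖ ^ 2 ≤ ε ^ 2 := by
        rw [lp_norm_sq_tsum]
        calc (∑' j, ‖((w - g : lp E 2) : ∀ j, E j) j‖ ^ 2)
            ≤ ∑' j, ε ^ 2 * ((c j)⁻¹ * ‖w j‖ ^ 2) :=
              Summable.tsum_le_tsum h4 (lp_summable_sq _) (h1.mul_left _)
          _ = ε ^ 2 * ∑' j, (c j)⁻¹ * ‖w j‖ ^ 2 := tsum_mul_left
          _ ≤ ε ^ 2 * 1 := mul_le_mul_of_nonneg_left h2 (sq_nonneg ε)
          _ = ε ^ 2 := mul_one _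
      have h6 : ‖w - g‖ ≤ ε := by nlinarith [norm_nonneg (w - g)]
      calc Metric.infDist (w : lp E 2) ((LinearMap.range φ : Submodule ℝ (lp E 2)) : Set (lp E 2))
          ≤ dist w g := Metric.infDist_le_dist_of_mem hgmem
        _ = ‖w - g‖ := dist_eq_norm _ _
        _ ≤ ε := h6
  refine le_antisymm (Nat.sInf_le hNmem) (le_csInf ⟨N, hNmem⟩ ?_)
  rintro n ⟨M, hMfin, hMrank, hMapprox⟩
  by_contra hlt
  push_neg at hlt
  -- hlt : n < N
  have hsne : s.Nonempty := by
    rcases Finset.eq_empty_or_nonempty s with h | h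
    · rw [hN_def, h, Finset.sum_empty] at hlt; omega
    · exact h
  set m := s.inf' hsne c with hm_def
  have hm_gt : ε ^ 2 < m := by
    rw [hm_def, Finset.lt_inf'_iff]
    intro j hj
    exact lt_of_le_of_ne ((hmem j).1 hj) (Ne.symm (hne j))
  have hm_pos : 0 < m := lt_trans (by positivity) hm_gt
  have hm_le : ∀ j ∈ s, m ≤ c j := fun j hj => Finset.inf'_le c hj
  haveI := hMfin
  haveI : CompleteSpace M := FiniteDimensional.complete ℝ M
  set f := (Submodule.orthogonalProjectionOnto M).toLinearMap ∘ₗ φ with hf_def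
  have hni : ¬ Function.Injective f := by
    intro hinj
    have := LinearMap.finrank_le_finrank_of_injective hinj
    rw [hrankF] at this
    omega
  have hker : LinearMap.ker f ≠ ⊥ := fun h => hni (LinearMap.ker_eq_bot.mp h)
  obtain ⟨v, hvker, hv0⟩ := (LinearMap.ker f).ne_bot_iff.mp hker
  set w₀ := φ v with hw0_def
  have hw0ne : w₀ ≠ 0 := fun h => hv0 (hφinj (by rw [map_zero]; exact h))
  have hw0orth : w₀ ∈ Mᗮ := by
    rw [← Submodule.orthogonalProjectionOnto_eq_zero_iff]
    exact hvker
  have hw0norm : ‖w₀‖ ≠ 0 := norm_ne_zero_iff.2 hw0ne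
  set r := Real.sqrt m with hr_def
  have hr_pos : 0 < r := Real.sqrt_pos.2 hm_pos
  set w : lp E 2 := (r / ‖w₀‖) • w₀ with hw_def
  have hworth : w ∈ Mᗮ := Submodule.smul_mem _ _ hw0orth
  have hwsupp : ∀ j ∉ s, (w : ∀ j, E j) j = 0 := by
    intro j hj
    rw [hw_def, lp.coeFn_smul, Pi.smul_apply, hw0_def, phiL_apply_not_mem s v j hj, smul_zero]
  have hwnorm : ‖w‖ = r := by
    rw [hw_def, norm_smul, norm_div, Real.norm_eq_abs, Real.norm_eq_abs,
      abs_of_pos hr_pos, abs_of_pos (lt_of_le_of_ne (norm_nonneg _) (Ne.symm hw0norm)),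
      div_mul_cancel₀ _ hw0norm]
  have hwnormsq : ‖w‖ ^ 2 = m := by
    rw [hwnorm, hr_def, Real.sq_sqrt hm_pos.le]
  -- w is in the ellipsoid
  have hwA : (∑' j, ENNReal.ofReal ((c j)⁻¹ * ‖w j‖ ^ 2)) ≤ 1 := by
    have hts : (∑' j, ENNReal.ofReal ((c j)⁻¹ * ‖w j‖ ^ 2))
        = ∑ j ∈ s, ENNReal.ofReal ((c j)⁻¹ * ‖w j‖ ^ 2) := by
      refine tsum_eq_sum fun j hj => ?_
      rw [hwsupp j hj]
      simp
    rw [hts]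
    have hsum_le : (∑ j ∈ s, (c j)⁻¹ * ‖w j‖ ^ 2) ≤ 1 := by
      have : (∑ j ∈ s, (c j)⁻¹ * ‖w j‖ ^ 2) ≤ ∑ j ∈ s, m⁻¹ * ‖w j‖ ^ 2 := by
        refine Finset.sum_le_sum fun j hj => ?_
        exact mul_le_mul_of_nonneg_right
          (inv_anti₀ hm_pos (hm_le j hj)) (sq_nonneg _)
      calc (∑ j ∈ s, (c j)⁻¹ * ‖w j‖ ^ 2) ≤ ∑ j ∈ s, m⁻¹ * ‖w j‖ ^ 2 := this
        _ = m⁻¹ * ∑ j ∈ s, ‖w j‖ ^ 2 := by rw [Finset.mul_sum]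
        _ = m⁻¹ * ‖w‖ ^ 2 := by rw [← lp_norm_sq_eq_sum w hwsupp]
        _ = 1 := by rw [hwnormsq, inv_mul_cancel₀ hm_pos.ne']
    calc (∑ j ∈ s, ENNReal.ofReal ((c j)⁻¹ * ‖w j‖ ^ 2))
        = ENNReal.ofReal (∑ j ∈ s, (c j)⁻¹ * ‖w j‖ ^ 2) :=
          (ENNReal.ofReal_sum_of_nonneg fun j _ =>
            mul_nonneg (inv_nonneg.2 (hc j).le) (sq_nonneg _)).symm
      _ ≤ 1 := ENNReal.ofReal_le_one.2 hsum_le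
  have happ := hMapprox w hwA
  -- but infDist w M ≥ ‖w‖ = r > ε
  have hlt' : Metric.infDist (w : lp E 2) (M : Set (lp E 2)) < r :=
    lt_of_le_of_lt happ (by rw [hr_def, ← Real.sqrt_sq hε.le]; exact Real.sqrt_lt_sqrt (sq_nonneg ε) hm_gt)
  obtain ⟨g, hgM, hgdist⟩ := (Metric.infDist_lt_iff ⟨0, M.zero_mem⟩).1 hlt'
  have hinner : inner ℝ w (g : lp E 2) = (0 : ℝ) := by
    have := (Submodule.mem_orthogonal' M w).1 hworth g hgM
    exact this
  have : r ≤ dist (w : lp E 2) g := by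
    rw [dist_eq_norm, ← hwnorm]
    nlinarith [norm_sub_sq_real (w : lp E 2) g, sq_nonneg ‖g‖, norm_nonneg ((w : lp E 2) - g),
      norm_nonneg (w : lp E 2)]
  linarith
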